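/- Every optimal set of two-means for the condensation measure P equals {13/60, 47/60}, and the second quantization error of P is V_2(P) = 8003/262800. -/
import Mathlib

open MeasureTheory Metric Set Filter

/-- The distortion error of a set `α` of quantizer points for `μ`, of order 2:
`∫ min_{a ∈ α} (x - a)^2 dμ(x)`. -/
noncomputable def distortion (μ : MeasureTheory.Measure ℝ) (α : Set ℝ) : ℝ :=
  ∫ x, (Metric.infDist x α) ^ 2 ∂μ

/-- The `n`th quantization error of order 2 for `μ`. -/
noncomputable def quantErr (μ : MeasureTheory.Measure ℝ) (n : ℕ) : ℝ :=
  sInf {e : ℝ | ∃ α : Set ℝ, α.Finite ∧ α.Nonempty ∧ α.ncard ≤ n ∧ e = distortion μ α}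

/-- `α` is an optimal set of `n`-means for `μ`. -/
def IsOptimalSet (μ : MeasureTheory.Measure ℝ) (n : ℕ) (α : Set ℝ) : Prop :=
  α.Finite ∧ α.Nonempty ∧ α.ncard ≤ n ∧ distortion μ α = quantErr μ n

/-- The similarity `S₁(x) = x/5`. -/
noncomputable def S1 : ℝ → ℝ := fun x => x / 5

/-- The similarity `S₂(x) = x/5 + 4/5`. -/
noncomputable def S2 : ℝ → ℝ := fun x => x / 5 + 4 / 5

/-- `P` is the condensation measure associated with `(S₁, S₂; 1/3, 1/3, 1/3; ν)`:
`P = (1/3) P∘S₁⁻¹ + (1/3) P∘S₂⁻¹ + (1/3) ν`. -/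
def IsCondensation (P ν : MeasureTheory.Measure ℝ) : Prop :=
  MeasureTheory.IsProbabilityMeasure P ∧
    P = (1 / 3 : ENNReal) • P.map S1 + (1 / 3 : ENNReal) • P.map S2 + (1 / 3 : ENNReal) • ν

/-- The uniform distribution on `[2/5, 3/5]`, i.e. the measure with density
`5 · 1_{[2/5, 3/5]}` with respect to Lebesgue measure. -/
noncomputable def nuUnif : MeasureTheory.Measure ℝ :=
  (5 : ENNReal) • (MeasureTheory.volume.restrict (Set.Icc (2 / 5 : ℝ) (3 / 5)))

namespace CondAux

lemma measurable_S1 : Measurable S1 := by unfold S1; fun_prop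
lemma measurable_S2 : Measurable S2 := by unfold S2; fun_prop

/-- integral against nuUnif as an interval integral -/
lemma nuint (f : ℝ → ℝ) : ∫ x, f x ∂nuUnif = 5 * ∫ x in (2/5:ℝ)..(3/5:ℝ), f x := by
  rw [nuUnif, integral_smul_measure, intervalIntegral.integral_of_le (by norm_num),
    ← integral_Icc_eq_integral_Ioc]
  simp [smul_eq_mul]

lemma int_lin (a b c : ℝ) : ∫ x in a..b, (c - x) = c*(b-a) - (b^2-a^2)/2 := by
  rw [intervalIntegral.integral_sub intervalIntegrable_const
    intervalIntegral.intervalIntegrable_id, integral_id, intervalIntegral.integral_const]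
  simp [smul_eq_mul]; ring

lemma int_lin' (a b c : ℝ) : ∫ x in a..b, (x - c) = (b^2-a^2)/2 - c*(b-a) := by
  rw [intervalIntegral.integral_sub intervalIntegral.intervalIntegrable_id
    intervalIntegrable_const, integral_id, intervalIntegral.integral_const]
  simp [smul_eq_mul]; ring

lemma int_abs_of_ge {a b c : ℝ} (hab : a ≤ b) (h : b ≤ c) :
    ∫ x in a..b, |x - c| = c*(b-a) - (b^2-a^2)/2 := by
  rw [intervalIntegral.integral_congr (g := fun x => c - x) ?_, int_lin]
  intro x hx
  rw [uIcc_of_le hab] at hx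
  show |x - c| = c - x
  rw [abs_of_nonpos (by linarith [hx.2] : x - c ≤ 0)]
  ring

lemma int_abs_of_le {a b c : ℝ} (hab : a ≤ b) (h : c ≤ a) :
    ∫ x in a..b, |x - c| = (b^2-a^2)/2 - c*(b-a) := by
  rw [intervalIntegral.integral_congr (g := fun x => x - c) ?_, int_lin']
  intro x hx
  rw [uIcc_of_le hab] at hx
  show |x - c| = x - c
  exact abs_of_nonneg (by linarith [hx.1] : (0:ℝ) ≤ x - c)

lemma int_abs_mid {a b c : ℝ} (h1 : a ≤ c) (h2 : c ≤ b) :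
    ∫ x in a..b, |x - c| = ((c-a)^2 + (b-c)^2)/2 := by
  have hi : ∀ u v : ℝ, IntervalIntegrable (fun x => |x - c|) volume u v :=
    fun u v => ((continuous_id.sub continuous_const).abs).intervalIntegrable u v
  rw [← intervalIntegral.integral_add_adjacent_intervals (b := c) (hi a c) (hi c b),
    int_abs_of_ge h1 le_rfl, int_abs_of_le h2 le_rfl]
  ring

section Pmeasure

variable {P : Measure ℝ}

lemma supp (hprob : IsProbabilityMeasure P)
    (heq : P = (1 / 3 : ENNReal) • P.map S1 + (1 / 3 : ENNReal) • P.map S2 +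
      (1 / 3 : ENNReal) • nuUnif) :
    P (Set.Icc (0:ℝ) 1)ᶜ = 0 := by
  set s := (Set.Icc (0:ℝ) 1)ᶜ with hsdef
  have hs : MeasurableSet s := measurableSet_Icc.compl
  have h1 : P.map S1 s ≤ P s := by
    rw [Measure.map_apply measurable_S1 hs]
    apply measure_mono
    intro x hx
    simp only [hsdef, mem_preimage, mem_compl_iff, mem_Icc, S1] at hx ⊢
    intro h; exact hx ⟨by linarith [h.1], by linarith [h.2]⟩
  have h2 : P.map S2 s ≤ P s := by
    rw [Measure.map_apply measurable_S2 hs]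
    apply measure_mono
    intro x hx
    simp only [hsdef, mem_preimage, mem_compl_iff, mem_Icc, S2] at hx ⊢
    intro h; exact hx ⟨by linarith [h.1], by linarith [h.2]⟩
  have h3 : nuUnif s = 0 := by
    rw [nuUnif, Measure.smul_apply, Measure.restrict_apply hs]
    have : s ∩ Set.Icc (2/5:ℝ) (3/5) = ∅ := by
      rw [eq_empty_iff_forall_notMem]
      rintro x ⟨hx1, hx2⟩
      rw [hsdef, mem_compl_iff, mem_Icc] at hx1
      rw [mem_Icc] at hx2
      exact hx1 ⟨by linarith [hx2.1], by linarith [hx2.2]⟩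
    rw [this]; simp
  have happ : P s = 1/3 * P.map S1 s + 1/3 * P.map S2 s + 1/3 * nuUnif s := by
    conv_lhs => rw [heq]
    simp [Measure.add_apply, Measure.smul_apply, smul_eq_mul]
  rw [h3, mul_zero, add_zero] at happ
  have hfin : P s ≠ ⊤ := measure_ne_top P s
  have hfin1 : P.map S1 s ≠ ⊤ := h1.trans_lt (lt_of_le_of_ne le_top hfin) |>.ne
  have hfin2 : P.map S2 s ≠ ⊤ := h2.trans_lt (lt_of_le_of_ne le_top hfin) |>.ne
  -- pass to reals
  have hr : (P s).toReal ≤ 1/3 * (P s).toReal + 1/3 * (P s).toReal := by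
    have e1 : (P.map S1 s).toReal ≤ (P s).toReal := ENNReal.toReal_mono hfin h1
    have e2 : (P.map S2 s).toReal ≤ (P s).toReal := ENNReal.toReal_mono hfin h2
    have := congrArg ENNReal.toReal happ
    rw [ENNReal.toReal_add (ENNReal.mul_ne_top (by norm_num) hfin1)
      (ENNReal.mul_ne_top (by norm_num) hfin2), ENNReal.toReal_mul,
      ENNReal.toReal_mul] at this
    have h13 : ((1:ENNReal)/3).toReal = 1/3 := by simp
    rw [h13] at this
    linarith
  have h0 : 0 ≤ (P s).toReal := ENNReal.toReal_nonneg
  have : (P s).toReal = 0 := by linarith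
  exact (ENNReal.toReal_eq_zero_iff _).1 this |>.resolve_right hfin

lemma ae_mem_Icc (hprob : IsProbabilityMeasure P)
    (heq : P = (1 / 3 : ENNReal) • P.map S1 + (1 / 3 : ENNReal) • P.map S2 +
      (1 / 3 : ENNReal) • nuUnif) :
    ∀ᵐ x ∂P, x ∈ Set.Icc (0:ℝ) 1 := by
  rw [ae_iff]
  exact supp hprob heq

lemma intP (hprob : IsProbabilityMeasure P) (hae : ∀ᵐ x ∂P, x ∈ Set.Icc (0:ℝ) 1)
    {f : ℝ → ℝ} (hf : Measurable f) (C : ℝ) (hC : ∀ x ∈ Set.Icc (0:ℝ) 1, |f x| ≤ C) :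
    Integrable f P := by
  refine Integrable.mono' (integrable_const C) hf.aestronglyMeasurable ?_
  exact hae.mono fun x hx => by simpa [Real.norm_eq_abs] using hC x hx

end Pmeasure


section Pmeasure2

variable {P : Measure ℝ}

lemma key (hprob : IsProbabilityMeasure P)
    (heq : P = (1 / 3 : ENNReal) • P.map S1 + (1 / 3 : ENNReal) • P.map S2 +
      (1 / 3 : ENNReal) • nuUnif)
    (hae : ∀ᵐ x ∂P, x ∈ Set.Icc (0:ℝ) 1)
    {f : ℝ → ℝ} (hf : Measurable f) (C : ℝ) (hC : ∀ x ∈ Set.Icc (0:ℝ) 1, |f x| ≤ C) :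
    ∫ x, f x ∂P = 1/3 * ((∫ x, f (x/5) ∂P) + (∫ x, f (x/5 + 4/5) ∂P) + ∫ x, f x ∂nuUnif) := by
  have hint1 : Integrable (fun x => f (x/5)) P := by
    refine intP hprob hae (hf.comp (by fun_prop)) C fun x hx => ?_
    exact hC _ ⟨by linarith [hx.1], by linarith [hx.2]⟩
  have hint2 : Integrable (fun x => f (x/5 + 4/5)) P := by
    refine intP hprob hae (hf.comp (by fun_prop)) C fun x hx => ?_
    exact hC _ ⟨by linarith [hx.1], by linarith [hx.2]⟩
  have hintnu : Integrable f nuUnif := by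
    rw [nuUnif]
    refine (integrable_smul_measure (by norm_num) (by norm_num)).2 ?_
    haveI : IsFiniteMeasure (volume.restrict (Set.Icc (2/5:ℝ) (3/5))) := by
      constructor
      rw [Measure.restrict_apply_univ, Real.volume_Icc]
      exact ENNReal.ofReal_lt_top
    refine Integrable.mono' (integrable_const C) hf.aestronglyMeasurable ?_
    filter_upwards [ae_restrict_mem measurableSet_Icc] with x hx
    simpa [Real.norm_eq_abs] using hC x ⟨by linarith [hx.1], by linarith [hx.2]⟩
  have hm1 : Integrable f (P.map S1) := by
    refine (integrable_map_measure hf.aestronglyMeasurable measurable_S1.aemeasurable).2 ?_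
    exact hint1
  have hm2 : Integrable f (P.map S2) := by
    refine (integrable_map_measure hf.aestronglyMeasurable measurable_S2.aemeasurable).2 ?_
    exact hint2
  have i1 : Integrable f ((1/3 : ENNReal) • P.map S1) :=
    (integrable_smul_measure (by norm_num) (by norm_num)).2 hm1
  have i2 : Integrable f ((1/3 : ENNReal) • P.map S2) :=
    (integrable_smul_measure (by norm_num) (by norm_num)).2 hm2
  have i3 : Integrable f ((1/3 : ENNReal) • nuUnif) :=
    (integrable_smul_measure (by norm_num) (by norm_num)).2 hintnu
  conv_lhs => rw [heq]
  rw [integral_add_measure (i1.add_measure i2) i3, integral_add_measure i1 i2,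
    integral_smul_measure, integral_smul_measure, integral_smul_measure,
    integral_map measurable_S1.aemeasurable hf.aestronglyMeasurable,
    integral_map measurable_S2.aemeasurable hf.aestronglyMeasurable]
  have h13 : ((1:ENNReal)/3).toReal = 1/3 := by simp
  rw [h13]
  simp only [S1, S2, smul_eq_mul]
  ring

variable (hprob : IsProbabilityMeasure P)
    (heq : P = (1 / 3 : ENNReal) • P.map S1 + (1 / 3 : ENNReal) • P.map S2 +
      (1 / 3 : ENNReal) • nuUnif)
    (hae : ∀ᵐ x ∂P, x ∈ Set.Icc (0:ℝ) 1)

include hprob hae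

lemma intId : Integrable (fun x : ℝ => x) P :=
  intP hprob hae measurable_id 1 fun x hx => by rw [abs_of_nonneg hx.1]; exact hx.2

lemma intSq : Integrable (fun x : ℝ => x^2) P :=
  intP hprob hae (measurable_id.pow_const 2) 1 fun x hx => by
    rw [abs_of_nonneg (sq_nonneg x)]; nlinarith [hx.1, hx.2]

lemma intAbs (c : ℝ) : Integrable (fun x : ℝ => |x - c|) P :=
  intP hprob hae ((measurable_id.sub_const c).abs) (1 + |c|) fun x hx => by
    rw [abs_abs]
    have := abs_sub x c
    have : |x| ≤ 1 := abs_le.2 ⟨by linarith [hx.1], hx.2⟩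
    calc |x - c| ≤ |x| + |c| := abs_sub x c
    _ ≤ 1 + |c| := by linarith

include heq

lemma momOne : ∫ x, x ∂P = 1/2 := by
  haveI := hprob
  have h := key hprob heq hae (f := fun x => x) measurable_id 1
    (fun x hx => by rw [abs_of_nonneg hx.1]; exact hx.2)
  rw [nuint, integral_id] at h
  have e1 : ∫ x, x/5 ∂P = (∫ x, x ∂P)/5 := integral_div 5 _
  have e2 : ∫ x, (x/5 + 4/5) ∂P = (∫ x, x ∂P)/5 + 4/5 := by
    rw [integral_add ((intId hprob hae).div_const 5) (integrable_const _), integral_div,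
      integral_const]
    simp
  rw [e1, e2] at h
  linarith [h]

lemma momTwo : ∫ x, x^2 ∂P = 79/219 := by
  haveI := hprob
  have h := key hprob heq hae (f := fun x => x^2) (measurable_id.pow_const 2) 1
    (fun x hx => by rw [abs_of_nonneg (sq_nonneg x)]; nlinarith [hx.1, hx.2])
  rw [nuint, integral_pow] at h
  have e1 : ∫ x, (x/5)^2 ∂P = (∫ x, x^2 ∂P)/25 := by
    rw [← integral_div]
    exact integral_congr_ae (Eventually.of_forall fun x => by ring)
  have e2 : ∫ x, (x/5 + 4/5)^2 ∂P = (∫ x, x^2 ∂P)/25 + ((8/25) * ∫ x, x ∂P) + 16/25 := by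
    have : ∀ x : ℝ, (x/5 + 4/5)^2 = x^2/25 + ((8/25)*x + 16/25) := fun x => by ring
    have ia : Integrable (fun a : ℝ => a^2/25) P := (intSq hprob hae).div_const 25
    have ib : Integrable (fun a : ℝ => 8/25 * a) P := (intId hprob hae).const_mul _
    have ic : Integrable (fun _ : ℝ => (16:ℝ)/25) P := integrable_const _
    have ibc : Integrable (fun a : ℝ => 8/25 * a + 16/25) P := ib.add ic
    rw [integral_congr_ae (Eventually.of_forall this), integral_add ia ibc,
      integral_add ib ic, integral_div, integral_const_mul, integral_const]
    simp [measure_univ]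
    ring
  rw [e1, e2, momOne hprob heq hae] at h
  norm_num at h
  linarith [h]

end Pmeasure2

section Pmeasure3

variable {P : Measure ℝ}
variable (hprob : IsProbabilityMeasure P)
    (heq : P = (1 / 3 : ENNReal) • P.map S1 + (1 / 3 : ENNReal) • P.map S2 +
      (1 / 3 : ENNReal) • nuUnif)
    (hae : ∀ᵐ x ∂P, x ∈ Set.Icc (0:ℝ) 1)

include hprob hae

lemma eS1mid (c : ℝ) : ∫ x, |x/5 - c| ∂P = (∫ x, |x - 5*c| ∂P)/5 := by
  rw [← integral_div]
  refine integral_congr_ae (Eventually.of_forall fun x => ?_)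
  show |x/5 - c| = |x - 5*c|/5
  rw [show x/5 - c = (x - 5*c)/5 by ring, abs_div]
  norm_num

lemma eS2mid (c : ℝ) : ∫ x, |x/5 + 4/5 - c| ∂P = (∫ x, |x - (5*c - 4)| ∂P)/5 := by
  rw [← integral_div]
  refine integral_congr_ae (Eventually.of_forall fun x => ?_)
  show |x/5 + 4/5 - c| = |x - (5*c - 4)|/5
  rw [show x/5 + 4/5 - c = (x - (5*c - 4))/5 by ring, abs_div]
  norm_num

lemma Lnonneg (c : ℝ) : 0 ≤ ∫ x, |x - c| ∂P := integral_nonneg fun x => abs_nonneg _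

include heq

lemma eS1hi (c : ℝ) (hc : 1/5 ≤ c) : ∫ x, |x/5 - c| ∂P = c - 1/10 := by
  haveI := hprob
  have h : ∫ x, |x/5 - c| ∂P = ∫ x, (c - x/5) ∂P := by
    refine integral_congr_ae (hae.mono fun x hx => ?_)
    show |x/5 - c| = c - x/5
    rw [abs_of_nonpos (by linarith [hx.1, hx.2] : x/5 - c ≤ 0)]
    ring
  rw [h, integral_sub (integrable_const c) ((intId hprob hae).div_const 5), integral_const,
    integral_div, momOne hprob heq hae]
  simp [measure_univ]
  norm_num

lemma eS2lo (c : ℝ) (hc : c ≤ 4/5) : ∫ x, |x/5 + 4/5 - c| ∂P = 9/10 - c := by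
  haveI := hprob
  have h : ∫ x, |x/5 + 4/5 - c| ∂P = ∫ x, (x/5 + (4/5 - c)) ∂P := by
    refine integral_congr_ae (hae.mono fun x hx => ?_)
    show |x/5 + 4/5 - c| = x/5 + (4/5 - c)
    rw [show x/5 + 4/5 - c = x/5 + (4/5 - c) by ring,
      abs_of_nonneg (by linarith [hx.1] : (0:ℝ) ≤ x/5 + (4/5 - c))]
  rw [h, integral_add ((intId hprob hae).div_const 5) (integrable_const _), integral_const,
    integral_div, momOne hprob heq hae]
  simp [measure_univ]
  ring

lemma Lle_one (c : ℝ) (h0 : 0 ≤ c) (h1 : c ≤ 1) : ∫ x, |x - c| ∂P ≤ 1 := by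
  haveI := hprob
  have h := integral_mono_ae (intAbs hprob hae c) (integrable_const 1)
    (hae.mono fun x hx => by
      show |x - c| ≤ 1
      exact abs_le.2 ⟨by linarith [hx.1], by linarith [hx.2]⟩)
  simpa [measure_univ] using h

lemma Labs_lo (c : ℝ) (hc : c ≤ 0) : ∫ x, |x - c| ∂P = 1/2 - c := by
  haveI := hprob
  have h : ∫ x, |x - c| ∂P = ∫ x, (x - c) ∂P := by
    refine integral_congr_ae (hae.mono fun x hx => ?_)
    exact abs_of_nonneg (by linarith [hx.1] : (0:ℝ) ≤ x - c)
  rw [h, integral_sub (intId hprob hae) (integrable_const c), integral_const,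
    momOne hprob heq hae]
  simp [measure_univ]

lemma Labs_hi (c : ℝ) (hc : 1 ≤ c) : ∫ x, |x - c| ∂P = c - 1/2 := by
  haveI := hprob
  have h : ∫ x, |x - c| ∂P = ∫ x, (c - x) ∂P := by
    refine integral_congr_ae (hae.mono fun x hx => ?_)
    show |x - c| = c - x
    rw [abs_of_nonpos (by linarith [hx.2] : x - c ≤ 0)]
    ring
  rw [h, integral_sub (integrable_const c) (intId hprob hae), integral_const,
    momOne hprob heq hae]
  simp [measure_univ]

lemma keyAbs (c : ℝ) : ∫ x, |x - c| ∂P = 1/3 * ((∫ x, |x/5 - c| ∂P) +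
    (∫ x, |x/5 + 4/5 - c| ∂P) + 5 * ∫ x in (2/5:ℝ)..(3/5:ℝ), |x - c|) := by
  have h := key hprob heq hae (f := fun x => |x - c|) ((measurable_id.sub_const c).abs)
    (1 + |c|) (fun x hx => by
      rw [abs_abs]
      have hx1 : |x| ≤ 1 := abs_le.2 ⟨by linarith [hx.1], hx.2⟩
      calc |x - c| ≤ |x| + |c| := abs_sub x c
      _ ≤ 1 + |c| := by linarith)
  rw [nuint] at h
  exact h

lemma LB (c : ℝ) (h0 : 0 ≤ c) (h1 : c ≤ 1/5) : ∫ x, |x - c| ∂P ≤ (8 - 10*c)/15 := by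
  have h := keyAbs hprob heq hae c
  rw [eS1mid hprob hae, eS2lo hprob heq hae c (by linarith),
    int_abs_of_le (by norm_num) (by linarith : c ≤ (2:ℝ)/5)] at h
  have hb := Lle_one hprob heq hae (5*c) (by linarith) (by linarith)
  rw [h]
  nlinarith [hb]

lemma LC (c : ℝ) (h0 : 1/5 ≤ c) (h1 : c ≤ 2/5) : ∫ x, |x - c| ∂P = (13/10 - c)/3 := by
  have h := keyAbs hprob heq hae c
  rw [eS1hi hprob heq hae c h0, eS2lo hprob heq hae c (by linarith),
    int_abs_of_le (by norm_num) (by linarith : c ≤ (2:ℝ)/5)] at h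
  rw [h]; ring

lemma LD (c : ℝ) (h0 : 2/5 ≤ c) (h1 : c ≤ 3/5) :
    ∫ x, |x - c| ∂P = (4/5 + (5/2)*((c - 2/5)^2 + (3/5 - c)^2))/3 := by
  have h := keyAbs hprob heq hae c
  rw [eS1hi hprob heq hae c (by linarith), eS2lo hprob heq hae c (by linarith),
    int_abs_mid h0 h1] at h
  rw [h]; ring

lemma LE (c : ℝ) (h0 : 3/5 ≤ c) (h1 : c ≤ 4/5) : ∫ x, |x - c| ∂P = (c + 3/10)/3 := by
  have h := keyAbs hprob heq hae c
  rw [eS1hi hprob heq hae c (by linarith), eS2lo hprob heq hae c h1,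
    int_abs_of_ge (by norm_num) (by linarith : (3:ℝ)/5 ≤ c)] at h
  rw [h]; ring

lemma LF (c : ℝ) (h0 : 4/5 ≤ c) (h1 : c ≤ 1) : ∫ x, |x - c| ∂P ≤ (10*c - 2)/15 := by
  have h := keyAbs hprob heq hae c
  rw [eS1hi hprob heq hae c (by linarith), eS2mid hprob hae,
    int_abs_of_ge (by norm_num) (by linarith : (3:ℝ)/5 ≤ c)] at h
  have hb := Lle_one hprob heq hae (5*c - 4) (by linarith) (by linarith)
  rw [h]
  nlinarith [hb]

lemma momQ (c : ℝ) : ∫ x, (x - c)^2 ∂P = 79/219 - c + c^2 := by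
  haveI := hprob
  have hpt : ∀ x : ℝ, (x - c)^2 = (x^2 - (2*c)*x) + c^2 := fun x => by ring
  have i1 : Integrable (fun x : ℝ => x^2 - (2*c)*x) P :=
    (intSq hprob hae).sub ((intId hprob hae).const_mul _)
  rw [integral_congr_ae (Eventually.of_forall hpt), integral_add i1 (integrable_const _),
    integral_sub (intSq hprob hae) ((intId hprob hae).const_mul _), integral_const_mul,
    integral_const, momOne hprob heq hae, momTwo hprob heq hae]
  simp [measure_univ]
  ring

lemma mainlt (c : ℝ) (hc : c ≠ 1/2) :
    8003/262800 < (79/219 - c + c^2) - (∫ x, |x - c| ∂P)^2 := by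
  have hL0 : 0 ≤ ∫ x, |x - c| ∂P := Lnonneg hprob hae c
  rcases le_or_gt c 0 with h|h
  · rw [Labs_lo hprob heq hae c h]; nlinarith []
  rcases le_or_gt c (1/5) with h2|h2
  · have hub := LB hprob heq hae c h.le h2
    nlinarith [mul_self_le_mul_self hL0 hub, sq_nonneg (c - 1/5)]
  rcases le_or_gt c (2/5) with h3|h3
  · rw [LC hprob heq hae c h2.le h3]; nlinarith [sq_nonneg (c - 2/5)]
  rcases le_or_gt c (3/5) with h4|h4
  · rw [LD hprob heq hae c h3.le h4]
    have hne : c - 1/2 ≠ 0 := sub_ne_zero.2 hc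
    have ht : 0 < (c - 1/2)^2 := by positivity
    have hsq : (c - 1/2)^2 ≤ 1/100 := by
      nlinarith [mul_nonneg (by linarith : (0:ℝ) ≤ c - 2/5) (by linarith : (0:ℝ) ≤ 3/5 - c)]
    nlinarith [mul_pos ht (show (0:ℝ) < 1/18 - 25/9*(c - 1/2)^2 by nlinarith [hsq])]
  rcases le_or_gt c (4/5) with h5|h5
  · rw [LE hprob heq hae c h4.le h5]; nlinarith [sq_nonneg (c - 3/5)]
  rcases le_or_gt c 1 with h6|h6
  · have hub := LF hprob heq hae c h5.le h6
    nlinarith [mul_self_le_mul_self hL0 hub, sq_nonneg (c - 4/5)]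
  · rw [Labs_hi hprob heq hae c h6.le]; nlinarith []

lemma Lhalf : ∫ x, |x - (1/2 : ℝ)| ∂P = 17/60 := by
  rw [LD hprob heq hae (1/2) (by norm_num) (by norm_num)]
  norm_num

end Pmeasure3

lemma infDist_pair (x a b : ℝ) : infDist x ({a, b} : Set ℝ) = min (dist x a) (dist x b) := by
  refine le_antisymm (le_min (infDist_le_dist_of_mem (by simp))
    (infDist_le_dist_of_mem (by simp))) ?_
  by_contra hlt
  push_neg at hlt
  obtain ⟨y, hy, hd⟩ := (infDist_lt_iff ⟨a, by simp⟩).1 hlt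
  simp only [mem_insert_iff, mem_singleton_iff] at hy
  rcases hy with rfl | rfl
  · exact absurd hd (not_lt.2 (min_le_left _ _))
  · exact absurd hd (not_lt.2 (min_le_right _ _))

lemma pair_sq_helper {a b : ℝ} (hab : a ≤ b) (x : ℝ) :
    (min |x - a| |x - b|)^2 = (|x - (a+b)/2| - (b - a)/2)^2 := by
  rcases le_total x ((a+b)/2) with hx|hx
  · have hxb : |x - b| = b - x := by rw [abs_of_nonpos (by linarith)]; ring
    have hmin : |x - a| ≤ |x - b| := by
      rw [hxb]; exact abs_le.2 ⟨by linarith, by linarith⟩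
    rw [min_eq_left hmin, abs_of_nonpos (show x - (a+b)/2 ≤ 0 by linarith), sq_abs]
    ring
  · have hxa : |x - a| = x - a := abs_of_nonneg (by linarith)
    have hmin : |x - b| ≤ |x - a| := by
      rw [hxa]; exact abs_le.2 ⟨by linarith, by linarith⟩
    rw [min_eq_right hmin, abs_of_nonneg (show (0:ℝ) ≤ x - (a+b)/2 by linarith), sq_abs]
    ring

lemma pair_sq (a b x : ℝ) :
    (min |x - a| |x - b|)^2 = (|x - (a+b)/2| - |a - b|/2)^2 := by
  rcases le_total a b with hab|hab
  · rw [abs_sub_comm a b, abs_of_nonneg (by linarith : (0:ℝ) ≤ b - a)]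
    exact pair_sq_helper hab x
  · rw [min_comm, abs_of_nonneg (by linarith : (0:ℝ) ≤ a - b), add_comm a b]
    have h := pair_sq_helper hab x
    rw [h]

section Pmeasure4

variable {P : Measure ℝ}
variable (hprob : IsProbabilityMeasure P)
    (heq : P = (1 / 3 : ENNReal) • P.map S1 + (1 / 3 : ENNReal) • P.map S2 +
      (1 / 3 : ENNReal) • nuUnif)
    (hae : ∀ᵐ x ∂P, x ∈ Set.Icc (0:ℝ) 1)

include hprob heq hae

lemma distortion_pair (a b : ℝ) :
    distortion P {a, b} = (79/219 - (a+b)/2 + ((a+b)/2)^2) + (|a - b|/2)^2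
      - 2*(|a - b|/2)*(∫ x, |x - (a+b)/2| ∂P) := by
  haveI := hprob
  set c := (a+b)/2 with hcdef
  set d := |a - b|/2 with hddef
  have h1 : ∀ x : ℝ, (infDist x ({a, b} : Set ℝ))^2 = ((x - c)^2 - 2*d*|x - c|) + d^2 := by
    intro x
    rw [infDist_pair, Real.dist_eq, Real.dist_eq, pair_sq a b x, ← hcdef, ← hddef, sub_sq,
      sq_abs]
    ring
  have iQ : Integrable (fun x => (x - c)^2) P := by
    refine intP hprob hae ((measurable_id.sub_const c).pow_const 2) ((1 + |c|)^2) fun x hx => ?_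
    rw [abs_of_nonneg (sq_nonneg _)]
    have hx1 : |x| ≤ 1 := abs_le.2 ⟨by linarith [hx.1], hx.2⟩
    have h2 : |x - c| ≤ 1 + |c| := by
      calc |x - c| ≤ |x| + |c| := abs_sub x c
      _ ≤ 1 + |c| := by linarith
    nlinarith [abs_nonneg (x - c), abs_nonneg c, sq_abs (x - c)]
  have iA := intAbs hprob hae c
  have iQA : Integrable (fun x => (x - c)^2 - 2*d*|x - c|) P := iQ.sub (iA.const_mul _)
  unfold distortion
  simp_rw [h1]
  rw [integral_add iQA (integrable_const _), integral_sub iQ (iA.const_mul _),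
    integral_const_mul, integral_const, momQ hprob heq hae c]
  simp [measure_univ]
  ring

end Pmeasure4

end CondAux

open CondAux

theorem optimal_two_means_uniform (P : MeasureTheory.Measure ℝ)
    (hP : IsCondensation P nuUnif) :
    (∀ α : Set ℝ, IsOptimalSet P 2 α → α = {13 / 60, 47 / 60}) ∧
      quantErr P 2 = 8003 / 262800 := by
  obtain ⟨hprob, heq⟩ := hP
  haveI := hprob
  have hae := ae_mem_Icc hprob heq
  have hLhalf := Lhalf hprob heq hae
  -- distortion of the candidate set
  have hVmem : distortion P {(13/60 : ℝ), 47/60} = 8003/262800 := by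
    rw [distortion_pair hprob heq hae]
    have h1 : ((13:ℝ)/60 + 47/60)/2 = 1/2 := by norm_num
    have h2 : |(13:ℝ)/60 - 47/60| = 17/30 := by
      rw [show (13:ℝ)/60 - 47/60 = -(17/30) by norm_num, abs_neg,
        abs_of_nonneg (by norm_num : (0:ℝ) ≤ 17/30)]
    rw [h1, h2, hLhalf]
    norm_num
  -- lower bound for any pair
  have hlb : ∀ a b : ℝ, (8003/262800 : ℝ) ≤ distortion P {a, b} := by
    intro a b
    rw [distortion_pair hprob heq hae]
    by_cases hc : (a+b)/2 = 1/2
    · rw [hc, hLhalf]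
      nlinarith [sq_nonneg (|a - b|/2 - 17/60)]
    · have h := mainlt hprob heq hae ((a+b)/2) hc
      nlinarith [sq_nonneg (|a - b|/2 - ∫ x, |x - (a+b)/2| ∂P)]
  -- representation of small sets
  have hrep : ∀ α : Set ℝ, α.Finite → α.Nonempty → α.ncard ≤ 2 → ∃ a b : ℝ, α = {a, b} := by
    intro α hfin hne hcard
    have hpos : 0 < α.ncard := (Set.ncard_pos hfin).2 hne
    have h12 : α.ncard = 1 ∨ α.ncard = 2 := by omega
    rcases h12 with h|h
    · obtain ⟨a, rfl⟩ := Set.ncard_eq_one.1 h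
      exact ⟨a, a, (Set.pair_eq_singleton a).symm⟩
    · obtain ⟨a, b, -, rfl⟩ := Set.ncard_eq_two.1 h
      exact ⟨a, b, rfl⟩
  have hmem : (8003/262800 : ℝ) ∈
      {e : ℝ | ∃ α : Set ℝ, α.Finite ∧ α.Nonempty ∧ α.ncard ≤ 2 ∧ e = distortion P α} := by
    refine ⟨{13/60, 47/60}, Set.toFinite _, ⟨13/60, by simp⟩, ?_, hVmem.symm⟩
    exact (Set.ncard_pair (by norm_num : (13:ℝ)/60 ≠ 47/60)).le
  have hbd : ∀ e ∈ {e : ℝ | ∃ α : Set ℝ, α.Finite ∧ α.Nonempty ∧ α.ncard ≤ 2 ∧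
      e = distortion P α}, (8003/262800 : ℝ) ≤ e := by
    rintro e ⟨α, hfin, hne, hcard, rfl⟩
    obtain ⟨a, b, rfl⟩ := hrep α hfin hne hcard
    exact hlb a b
  have hQE : quantErr P 2 = 8003/262800 := by
    unfold quantErr
    exact le_antisymm (csInf_le ⟨_, hbd⟩ hmem) (le_csInf ⟨_, hmem⟩ hbd)
  refine ⟨?_, hQE⟩
  rintro α ⟨hfin, hne, hcard, hopt⟩
  obtain ⟨a, b, rfl⟩ := hrep α hfin hne hcard
  rw [hQE] at hopt
  rw [distortion_pair hprob heq hae] at hopt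
  have hc12 : (a+b)/2 = 1/2 := by
    by_contra hcne
    have h := mainlt hprob heq hae ((a+b)/2) hcne
    nlinarith [sq_nonneg (|a - b|/2 - ∫ x, |x - (a+b)/2| ∂P)]
  rw [hc12, hLhalf] at hopt
  have hd17 : |a - b|/2 = 17/60 := by
    have hz : (|a - b|/2 - 17/60)^2 = 0 := by nlinarith [hopt]
    have := pow_eq_zero_iff (n := 2) (by norm_num) |>.1 hz
    linarith
  have habs : |a - b| = 17/30 := by linarith
  have hsum : a + b = 1 := by
    have := hc12; linarith
  rcases abs_cases (a - b) with ⟨h1, h2⟩|⟨h1, h2⟩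
  · have ha : a = 47/60 := by rw [habs] at h1; linarith
    have hb : b = 13/60 := by linarith
    rw [ha, hb]
    exact Set.pair_comm _ _
  · have ha : a = 13/60 := by rw [habs] at h1; linarith
    have hb : b = 47/60 := by linarith
    rw [ha, hb]
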